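/- Let F : J → ℝ be continuous on an interval J, let ψ₁, ψ₂ : J → ℝ be twice differentiable solutions of ψ'' = (1/2)(F(x)+1)·ψ, let θ₁, θ₂ : J → ℝ be twice differentiable solutions of θ'' = (1/2)(F(x)−1)·θ, and let C₁, C₂ ∈ ℝ. Suppose J₀ ⊆ J is an interval on which C₁ψ₂ − ψ₁ ≠ 0, C₂θ₂ − θ₁ ≠ 0, and D(x) := (C₁ψ₂'(x) − ψ₁'(x))/(C₁ψ₂(x) − ψ₁(x)) − (C₂θ₂'(x) − θ₁'(x))/(C₂θ₂(x) − θ₁(x)) ≠ 0. Then u(x) := 1/D(x) is twice differentiable on J₀, never zero, and solves the Painlevé–Gambier XXVII equation u'' − u'²/(2u) + 2uu' + u³/2 − F(x)·u + 1/(2u) = 0 on J₀. -/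

import Mathlib

/- The Painlevé–Gambier XXVII equation considered is
u'' − u'²/(2u) + 2uu' + u³/2 − F(x)u + 1/(2u) = 0 for a given continuous F. -/

set_option maxHeartbeats 2000000 in
lemma key_identity (a b f : ℝ) (ht : a - b ≠ 0) :
    (-(-(2 * a * (1 / 2 * (f + 1) - a ^ 2)) + 2 * b * (1 / 2 * (f - 1) - b ^ 2)) * (a - b) ^ 2 -
        -(1 - a ^ 2 + b ^ 2) * (2 * (a - b) * (1 - a ^ 2 + b ^ 2))) / ((a - b) ^ 2) ^ 2
      - (-(1 - a ^ 2 + b ^ 2) / (a - b) ^ 2) ^ 2 / (2 * (1 / (a - b)))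
      + 2 * (1 / (a - b)) * (-(1 - a ^ 2 + b ^ 2) / (a - b) ^ 2)
      + (1 / (a - b)) ^ 3 / 2 - f * (1 / (a - b)) + 1 / (2 * (1 / (a - b))) = 0 := by
  have h2 : (a - b) ^ 2 ≠ 0 := pow_ne_zero 2 ht
  field_simp
  ring

/-- if `ψ₁, ψ₂` solve `ψ'' = (1/2)(F+1)ψ`, `θ₁, θ₂` solve
`θ'' = (1/2)(F−1)θ`, and on `J₀ ⊆ J` the quantities `C₁ψ₂ − ψ₁`, `C₂θ₂ − θ₁` and
`D = (C₁ψ₂' − ψ₁')/(C₁ψ₂ − ψ₁) − (C₂θ₂' − θ₁')/(C₂θ₂ − θ₁)` never vanish, then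
`u = 1/D` is twice differentiable, nowhere zero on `J₀`, and solves the
Painlevé–Gambier XXVII equation there. -/
theorem statement14 (J J₀ : Set ℝ) (hJ₀ : J₀ ⊆ J)
    (F : ℝ → ℝ) (hF : ContinuousOn F J)
    (ψ₁ ψ₂ θ₁ θ₂ dψ₁ dψ₂ dθ₁ dθ₂ : ℝ → ℝ)
    (hψ₁ : ∀ x ∈ J, HasDerivAt ψ₁ (dψ₁ x) x)
    (hψ₁'' : ∀ x ∈ J, HasDerivAt dψ₁ ((1 / 2) * (F x + 1) * ψ₁ x) x)
    (hψ₂ : ∀ x ∈ J, HasDerivAt ψ₂ (dψ₂ x) x)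
    (hψ₂'' : ∀ x ∈ J, HasDerivAt dψ₂ ((1 / 2) * (F x + 1) * ψ₂ x) x)
    (hθ₁ : ∀ x ∈ J, HasDerivAt θ₁ (dθ₁ x) x)
    (hθ₁'' : ∀ x ∈ J, HasDerivAt dθ₁ ((1 / 2) * (F x - 1) * θ₁ x) x)
    (hθ₂ : ∀ x ∈ J, HasDerivAt θ₂ (dθ₂ x) x)
    (hθ₂'' : ∀ x ∈ J, HasDerivAt dθ₂ ((1 / 2) * (F x - 1) * θ₂ x) x)
    (C₁ C₂ : ℝ)
    (hψden : ∀ x ∈ J₀, C₁ * ψ₂ x - ψ₁ x ≠ 0)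
    (hθden : ∀ x ∈ J₀, C₂ * θ₂ x - θ₁ x ≠ 0)
    (D : ℝ → ℝ)
    (hD : D = fun x =>
      (C₁ * dψ₂ x - dψ₁ x) / (C₁ * ψ₂ x - ψ₁ x) -
        (C₂ * dθ₂ x - dθ₁ x) / (C₂ * θ₂ x - θ₁ x))
    (hD0 : ∀ x ∈ J₀, D x ≠ 0)
    (u : ℝ → ℝ) (hu : u = fun x => 1 / D x) :
    ∃ u' u'' : ℝ → ℝ, ∀ x ∈ J₀,
      HasDerivAt u (u' x) x ∧ HasDerivAt u' (u'' x) x ∧ u x ≠ 0 ∧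
      u'' x - (u' x) ^ 2 / (2 * u x) + 2 * u x * u' x + (u x) ^ 3 / 2
        - F x * u x + 1 / (2 * u x) = 0 := by
  classical
  set P : ℝ → ℝ := fun x => C₁ * ψ₂ x - ψ₁ x with hP
  set dP : ℝ → ℝ := fun x => C₁ * dψ₂ x - dψ₁ x with hdP
  set Q : ℝ → ℝ := fun x => C₂ * θ₂ x - θ₁ x with hQ
  set dQ : ℝ → ℝ := fun x => C₂ * dθ₂ x - dθ₁ x with hdQ
  set p : ℝ → ℝ := fun x => dP x / P x with hp
  set q : ℝ → ℝ := fun x => dQ x / Q x with hq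
  set D' : ℝ → ℝ := fun x => 1 - (p x) ^ 2 + (q x) ^ 2 with hD'
  set p' : ℝ → ℝ := fun x => (1 / 2) * (F x + 1) - (p x) ^ 2 with hp'
  set q' : ℝ → ℝ := fun x => (1 / 2) * (F x - 1) - (q x) ^ 2 with hq'
  set dD' : ℝ → ℝ := fun x => -(2 * p x * p' x) + 2 * q x * q' x with hdD'
  refine ⟨fun x => -D' x / (D x) ^ 2,
    fun x => (-(dD' x) * (D x) ^ 2 - (-D' x) * (2 * D x * D' x)) / ((D x) ^ 2) ^ 2,
    fun x hx => ?_⟩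
  have hxJ : x ∈ J := hJ₀ hx
  have hPne : P x ≠ 0 := hψden x hx
  have hQne : Q x ≠ 0 := hθden x hx
  have hDne : D x ≠ 0 := hD0 x hx
  -- basic derivatives
  have hPd : HasDerivAt P (dP x) x := ((hψ₂ x hxJ).const_mul C₁).sub (hψ₁ x hxJ)
  have hdPd : HasDerivAt dP ((1 / 2) * (F x + 1) * P x) x := by
    have := ((hψ₂'' x hxJ).const_mul C₁).sub (hψ₁'' x hxJ)
    refine this.congr_deriv ?_
    simp only [hP]
    ring
  have hQd : HasDerivAt Q (dQ x) x := ((hθ₂ x hxJ).const_mul C₂).sub (hθ₁ x hxJ)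
  have hdQd : HasDerivAt dQ ((1 / 2) * (F x - 1) * Q x) x := by
    have := ((hθ₂'' x hxJ).const_mul C₂).sub (hθ₁'' x hxJ)
    refine this.congr_deriv ?_
    simp only [hQ]
    ring
  have hpd : HasDerivAt p (p' x) x := by
    have := hdPd.div hPd hPne
    refine this.congr_deriv ?_
    simp only [hp', hp]
    field_simp
  have hqd : HasDerivAt q (q' x) x := by
    have := hdQd.div hQd hQne
    refine this.congr_deriv ?_
    simp only [hq', hq]
    field_simp
  have hDeq : D = fun x => p x - q x := by
    ext y; simp [hD, hp, hq, hP, hQ, hdP, hdQ]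
  have hDd : HasDerivAt D (D' x) x := by
    rw [hDeq]
    have := hpd.sub hqd
    refine this.congr_deriv ?_
    simp only [hD', hp', hq']
    ring
  have hD'd : HasDerivAt D' (dD' x) x := by
    have h1 : HasDerivAt (fun y => (p y) ^ 2) (2 * p x * p' x) x := by
      have := hpd.pow 2
      refine this.congr_deriv ?_; ring
    have h2 : HasDerivAt (fun y => (q y) ^ 2) (2 * q x * q' x) x := by
      have := hqd.pow 2
      refine this.congr_deriv ?_; ring
    have := ((hasDerivAt_const x (1 : ℝ)).sub h1).add h2
    refine this.congr_deriv ?_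
    simp only [hdD']
    ring
  have hud : HasDerivAt u (-D' x / (D x) ^ 2) x := by
    rw [hu]
    have := (hasDerivAt_const x (1 : ℝ)).div hDd hDne
    refine this.congr_deriv ?_
    ring
  have hD2d : HasDerivAt (fun y => (D y) ^ 2) (2 * D x * D' x) x := by
    have := hDd.pow 2
    refine this.congr_deriv ?_; ring
  have hD2ne : (D x) ^ 2 ≠ 0 := pow_ne_zero 2 hDne
  have hu'd : HasDerivAt (fun y => -D' y / (D y) ^ 2)
      ((-(dD' x) * (D x) ^ 2 - (-D' x) * (2 * D x * D' x)) / ((D x) ^ 2) ^ 2) x :=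
    (hD'd.neg).div hD2d hD2ne
  refine ⟨hud, hu'd, ?_, ?_⟩
  · rw [hu]; exact one_div_ne_zero hDne
  · have hDx : D x = p x - q x := by rw [hDeq]
    have ht : p x - q x ≠ 0 := hDx ▸ hDne
    rw [hu]
    simp only [hDx, hD', hdD', hp', hq']
    exact key_identity (p x) (q x) (F x) ht
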